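/- Under the same setup (p supported on two indices i₁, i₂ with positive components summing to 1), T²p = p, i.e., (T²p)⁽ⁱ¹⁾ = p⁽ⁱ¹⁾ and (T²p)⁽ⁱ²⁾ = p⁽ⁱ²⁾. -/

import Mathlib

open Finset

noncomputable def gam {n : ℕ} (lam : Fin (n+1) → ℝ) (Psi : ℝ → ℝ) (p : Fin (n+1) → ℝ) : ℝ :=
  (∑ i, Psi (lam i) * lam i * p i) / (∑ i, Psi (lam i) * p i)

noncomputable def Tmap {n : ℕ} (lam : Fin (n+1) → ℝ) (Psi : ℝ → ℝ) (p : Fin (n+1) → ℝ) :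
    Fin (n+1) → ℝ :=
  fun i => (lam i - gam lam Psi p) ^ 2 * p i / ∑ j, (lam j - gam lam Psi p) ^ 2 * p j

noncomputable def Theta {n : ℕ} (lam : Fin (n+1) → ℝ) (Psi : ℝ → ℝ) (p : Fin (n+1) → ℝ) : ℝ :=
  (∑ i, Psi (lam i) * (lam i - gam lam Psi p) ^ 2 * p i) / (∑ i, Psi (lam i) * p i)
lemma sum_two {n : ℕ} (i₁ i₂ : Fin (n+1)) (hne : i₁ ≠ i₂) (g : Fin (n+1) → ℝ)
    (hg : ∀ i, i ≠ i₁ → i ≠ i₂ → g i = 0) : ∑ i, g i = g i₁ + g i₂ := by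
  rw [← Finset.sum_pair hne]
  refine (Finset.sum_subset (Finset.subset_univ _) ?_).symm
  intro x _ hx
  simp only [Finset.mem_insert, Finset.mem_singleton, not_or] at hx
  exact hg x hx.1 hx.2

lemma Tmap_two_point {n : ℕ} (lam : Fin (n+1) → ℝ) (Psi : ℝ → ℝ) (p : Fin (n+1) → ℝ)
    (i₁ i₂ : Fin (n+1)) (hne : i₁ ≠ i₂) (hl : lam i₁ ≠ lam i₂)
    (ha : 0 < Psi (lam i₁)) (hb : 0 < Psi (lam i₂))
    (h1 : 0 < p i₁) (h2 : 0 < p i₂)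
    (hzero : ∀ i, i ≠ i₁ → i ≠ i₂ → p i = 0) :
    Tmap lam Psi p i₁ =
      Psi (lam i₂) ^ 2 * p i₂ / (Psi (lam i₁) ^ 2 * p i₁ + Psi (lam i₂) ^ 2 * p i₂) ∧
    Tmap lam Psi p i₂ =
      Psi (lam i₁) ^ 2 * p i₁ / (Psi (lam i₁) ^ 2 * p i₁ + Psi (lam i₂) ^ 2 * p i₂) ∧
    ∀ i, i ≠ i₁ → i ≠ i₂ → Tmap lam Psi p i = 0 := by
  set a := Psi (lam i₁) with hadef
  set b := Psi (lam i₂) with hbdef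
  set l₁ := lam i₁
  set l₂ := lam i₂
  set p₁ := p i₁
  set p₂ := p i₂
  have hS : 0 < a * p₁ + b * p₂ := by positivity
  have hgam : gam lam Psi p = (a * l₁ * p₁ + b * l₂ * p₂) / (a * p₁ + b * p₂) := by
    unfold gam
    rw [sum_two i₁ i₂ hne _ (fun i hi1 hi2 => by rw [hzero i hi1 hi2]; ring),
        sum_two i₁ i₂ hne _ (fun i hi1 hi2 => by rw [hzero i hi1 hi2]; ring)]
  have hd : l₁ - l₂ ≠ 0 := sub_ne_zero.mpr hl
  have hγ1 : l₁ - gam lam Psi p = b * p₂ * (l₁ - l₂) / (a * p₁ + b * p₂) := by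
    rw [hgam]; field_simp; ring
  have hγ2 : l₂ - gam lam Psi p = a * p₁ * (l₂ - l₁) / (a * p₁ + b * p₂) := by
    rw [hgam]; field_simp; ring
  have hD : ∑ j, (lam j - gam lam Psi p) ^ 2 * p j =
      (l₁ - gam lam Psi p) ^ 2 * p₁ + (l₂ - gam lam Psi p) ^ 2 * p₂ := by
    exact sum_two i₁ i₂ hne _ (fun i hi1 hi2 => by rw [hzero i hi1 hi2]; ring)
  have hDpos : 0 < (l₁ - gam lam Psi p) ^ 2 * p₁ + (l₂ - gam lam Psi p) ^ 2 * p₂ := by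
    rw [hγ1, hγ2]
    have : 0 < (b * p₂ * (l₁ - l₂) / (a * p₁ + b * p₂)) ^ 2 * p₁ := by positivity
    nlinarith [sq_nonneg (a * p₁ * (l₂ - l₁) / (a * p₁ + b * p₂)), h2.le]
  have hD2 : 0 < a ^ 2 * p₁ + b ^ 2 * p₂ := by positivity
  refine ⟨?_, ?_, ?_⟩
  · show (l₁ - gam lam Psi p) ^ 2 * p₁ / _ = _
    rw [hD, hγ1, hγ2]
    rw [hγ1, hγ2] at hDpos
    field_simp
    ring
  · show (l₂ - gam lam Psi p) ^ 2 * p₂ / _ = _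
    rw [hD, hγ1, hγ2]
    rw [hγ1, hγ2] at hDpos
    field_simp
    ring
  · intro i hi1 hi2
    show (lam i - gam lam Psi p) ^ 2 * p i / _ = 0
    rw [hzero i hi1 hi2]
    simp

theorem Tmap_sq_eq_self {n : ℕ} (lam : Fin (n+1) → ℝ) (Psi : ℝ → ℝ) (p : Fin (n+1) → ℝ)
    (hmono : StrictMono lam) (hpos : 0 < lam 0)
    (hPsi : ∀ x ∈ Set.Icc (lam 0) (lam (Fin.last n)), 0 < Psi x)
    (i₁ i₂ : Fin (n+1)) (hne : i₁ ≠ i₂)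
    (h1 : 0 < p i₁) (h2 : 0 < p i₂) (hsum : p i₁ + p i₂ = 1)
    (hzero : ∀ i, i ≠ i₁ → i ≠ i₂ → p i = 0) :
    Tmap lam Psi (Tmap lam Psi p) i₁ = p i₁ ∧
    Tmap lam Psi (Tmap lam Psi p) i₂ = p i₂ := by
  have hl : lam i₁ ≠ lam i₂ := fun h => hne (hmono.injective h)
  have hmem : ∀ i : Fin (n+1), lam i ∈ Set.Icc (lam 0) (lam (Fin.last n)) := fun i =>
    ⟨hmono.monotone (Fin.zero_le i), hmono.monotone (Fin.le_last i)⟩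
  have ha : 0 < Psi (lam i₁) := hPsi _ (hmem i₁)
  have hb : 0 < Psi (lam i₂) := hPsi _ (hmem i₂)
  set a := Psi (lam i₁)
  set b := Psi (lam i₂)
  obtain ⟨hq1, hq2, hq0⟩ := Tmap_two_point lam Psi p i₁ i₂ hne hl ha hb h1 h2 hzero
  set q := Tmap lam Psi p with hq
  have hD2 : 0 < a ^ 2 * p i₁ + b ^ 2 * p i₂ := by positivity
  have hq1pos : 0 < q i₁ := by rw [hq1]; positivity
  have hq2pos : 0 < q i₂ := by rw [hq2]; positivity
  obtain ⟨hr1, hr2, _⟩ := Tmap_two_point lam Psi q i₁ i₂ hne hl ha hb hq1pos hq2pos hq0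
  have key : a ^ 2 * (b ^ 2 * p i₂ / (a ^ 2 * p i₁ + b ^ 2 * p i₂)) +
      b ^ 2 * (a ^ 2 * p i₁ / (a ^ 2 * p i₁ + b ^ 2 * p i₂)) =
      a ^ 2 * b ^ 2 / (a ^ 2 * p i₁ + b ^ 2 * p i₂) := by
    rw [mul_div_assoc', mul_div_assoc', ← add_div]
    congr 1
    linear_combination a ^ 2 * b ^ 2 * hsum
  constructor
  · rw [hr1, hq1, hq2, key]
    simp only [a, b] at hD2 ha hb ⊢
    field_simp
  · rw [hr2, hq1, hq2, key]
    simp only [a, b] at hD2 ha hb ⊢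
    field_simp
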